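/- Let c > 0, α > 0, τ > 0, and let k : ℝ → ℝ be differentiable on [0, ∞) with τ k′(t) = k(t) c² − α k(t)³ for all t ≥ 0. If k(0) > 0 then k(t) → c/√α as t → ∞, and if k(0) < 0 then k(t) → −c/√α as t → ∞. -/

import Mathlib

open Filter Set intervalIntegral Real

lemma aux_pos (c α τ : ℝ) (hc : 0 < c) (hα : 0 < α) (hτ : 0 < τ)
    (k k' : ℝ → ℝ)
    (hderiv : ∀ t : ℝ, 0 ≤ t → HasDerivAt k (k' t) t)
    (hode : ∀ t : ℝ, 0 ≤ t → τ * k' t = k t * c ^ 2 - α * k t ^ 3)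
    (h0 : 0 < k 0) : Tendsto k atTop (nhds (c / Real.sqrt α)) := by
  have hkc : ∀ s : ℝ, 0 ≤ s → ContinuousAt k s := fun s hs => (hderiv s hs).continuousAt
  set g : ℝ → ℝ := fun s => (c ^ 2 - α * k s ^ 2) / τ with hg
  have hgc : ∀ s : ℝ, 0 ≤ s → ContinuousAt g s := by
    intro s hs
    exact (continuousAt_const.sub (continuousAt_const.mul ((hkc s hs).pow 2))).div_const τ
  have hgcOn : ContinuousOn g (Ici 0) := fun s hs => (hgc s hs).continuousWithinAt
  have hk' : ∀ x : ℝ, 0 ≤ x → k' x = k x * g x := by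
    intro x hx
    have := hode x hx
    rw [hg]
    show k' x = k x * ((c ^ 2 - α * k x ^ 2) / τ)
    rw [mul_div_assoc', eq_div_iff hτ.ne']
    linear_combination this
  -- F = primitive of g
  set F : ℝ → ℝ := fun t => ∫ s in (0:ℝ)..t, g s with hF
  have hint : ∀ x : ℝ, 0 ≤ x → IntervalIntegrable g MeasureTheory.volume 0 x := by
    intro x hx
    exact (hgcOn.mono (by rw [uIcc_of_le hx]; exact Icc_subset_Ici_self)).intervalIntegrable
  have hFd : ∀ x : ℝ, 0 ≤ x → HasDerivWithinAt F (g x) (Ici x) x := by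
    intro x hx
    refine integral_hasDerivWithinAt_right (hint x hx) ?_ ((hgc x hx).continuousWithinAt)
    exact ⟨Ici 0, mem_of_superset self_mem_nhdsWithin (fun y hy => le_trans hx (le_of_lt hy)),
      hgcOn.aestronglyMeasurable measurableSet_Ici⟩
  have hFda : ∀ x : ℝ, 0 < x → HasDerivAt F (g x) x := by
    intro x hx
    refine integral_hasDerivAt_right (hint x hx.le) ?_ (hgc x hx.le)
    exact ⟨Ici 0, Ici_mem_nhds hx, hgcOn.aestronglyMeasurable measurableSet_Ici⟩
  -- w = k * exp(-F) is constant on [0, ∞)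
  set w : ℝ → ℝ := fun t => k t * Real.exp (-F t) with hwdef
  have hw : ∀ x : ℝ, 0 ≤ x → HasDerivWithinAt w 0 (Ici x) x := by
    intro x hx
    have h1 := (hderiv x hx).hasDerivWithinAt (s := Ici x)
    have h2 : HasDerivWithinAt (fun t => Real.exp (-F t)) (Real.exp (-F x) * (-g x)) (Ici x) x :=
      ((hFd x hx).neg).exp
    have h3 := h1.mul h2
    refine h3.congr_deriv ?_
    rw [hk' x hx]; ring
  have hwcont : ContinuousOn w (Ici 0) := by
    intro x hx
    rcases eq_or_lt_of_le (mem_Ici.mp hx) with h | h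
    · subst h
      exact (hw 0 le_rfl).continuousWithinAt
    · refine ContinuousAt.continuousWithinAt ?_
      exact (hkc x h.le).mul
        (Real.continuous_exp.continuousAt.comp ((hFda x h).continuousAt.neg))
  have hwconst : ∀ t : ℝ, 0 ≤ t → w t = w 0 := by
    intro t ht
    exact constant_of_has_deriv_right_zero
      (hwcont.mono (fun y hy => hy.1)) (fun x hx => hw x hx.1) t ⟨ht, le_refl t⟩
  have hkpos : ∀ t : ℝ, 0 ≤ t → 0 < k t := by
    intro t ht
    have h1 := hwconst t ht
    have h2 : w 0 = k 0 := by simp [hwdef, hF]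
    rw [h2, hwdef] at h1
    simp only at h1
    nlinarith [Real.exp_pos (-F t), h0, h1]
  -- m = (1/k² - α/c²) * exp(2c²t/τ) is constant on [0, ∞)
  set m : ℝ → ℝ := fun t => ((k t ^ 2)⁻¹ - α / c ^ 2) * Real.exp (2 * c ^ 2 / τ * t) with hmdef
  have hm : ∀ x : ℝ, 0 ≤ x → HasDerivWithinAt m 0 (Ici x) x := by
    intro x hx
    have hkx := hkpos x hx
    have hne : k x ^ 2 ≠ 0 := by positivity
    have h1 : HasDerivWithinAt (fun t => (k t ^ 2)⁻¹ - α / c ^ 2)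
        (-(2 * k x ^ 1 * k' x) / (k x ^ 2) ^ 2) (Ici x) x :=
      ((((hderiv x hx).pow 2).inv hne).hasDerivWithinAt).sub_const _
    have h2 : HasDerivWithinAt (fun t : ℝ => Real.exp (2 * c ^ 2 / τ * t))
        (Real.exp (2 * c ^ 2 / τ * x) * (2 * c ^ 2 / τ)) (Ici x) x := by
      have := ((hasDerivAt_id x).const_mul (2 * c ^ 2 / τ)).exp
      simpa using this.hasDerivWithinAt
    have h3 := h1.mul h2
    refine h3.congr_deriv ?_
    rw [hk' x hx, hg]
    have hτ' : τ ≠ 0 := ne_of_gt hτ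
    have hkx' : k x ≠ 0 := ne_of_gt hkx
    field_simp [hg]
    ring
  have hmcont : ContinuousOn m (Ici 0) := by
    intro x hx
    have hne : k x ^ 2 ≠ 0 := by have := hkpos x hx; positivity
    refine ContinuousAt.continuousWithinAt ?_
    exact ((((hkc x hx).pow 2).inv₀ hne).sub continuousAt_const).mul
      ((Real.continuous_exp.comp (continuous_const.mul continuous_id)).continuousAt)
  have hmconst : ∀ t : ℝ, 0 ≤ t → m t = m 0 := by
    intro t ht
    exact constant_of_has_deriv_right_zero
      (hmcont.mono (fun y hy => hy.1)) (fun x hx => hm x hx.1) t ⟨ht, le_refl t⟩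
  set C : ℝ := (k 0 ^ 2)⁻¹ - α / c ^ 2 with hC
  set φ : ℝ → ℝ := fun t => α / c ^ 2 + C * Real.exp (-(2 * c ^ 2 / τ) * t) with hφ
  have hkform : ∀ t : ℝ, 0 ≤ t → (k t ^ 2)⁻¹ = φ t := by
    intro t ht
    have h1 := hmconst t ht
    have h2 : m 0 = C := by simp [hmdef, hC]
    rw [h2, hmdef] at h1
    simp only at h1
    have hE : Real.exp (-(2 * c ^ 2 / τ) * t) = (Real.exp (2 * c ^ 2 / τ * t))⁻¹ := by
      rw [← Real.exp_neg]; ring_nf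
    have h4 : C * Real.exp (-(2 * c ^ 2 / τ) * t) = (k t ^ 2)⁻¹ - α / c ^ 2 := by
      rw [← h1, hE]
      field_simp
    simp only [hφ]
    linarith
  -- limit of the explicit formula
  have hφlim : Tendsto φ atTop (nhds (α / c ^ 2)) := by
    have hcoef : -(2 * c ^ 2 / τ) < 0 := by
      have : (0:ℝ) < 2 * c ^ 2 / τ := by positivity
      linarith
    have h1 : Tendsto (fun t : ℝ => -(2 * c ^ 2 / τ) * t) atTop atBot :=
      Tendsto.const_mul_atTop_of_neg hcoef tendsto_id
    have h2 : Tendsto (fun t : ℝ => Real.exp (-(2 * c ^ 2 / τ) * t)) atTop (nhds 0) :=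
      Real.tendsto_exp_atBot.comp h1
    have h3 : Tendsto (fun t : ℝ => α / c ^ 2 + C * Real.exp (-(2 * c ^ 2 / τ) * t)) atTop
        (nhds (α / c ^ 2 + C * 0)) := tendsto_const_nhds.add (tendsto_const_nhds.mul h2)
    simpa [hφ] using h3
  have hαc : (0:ℝ) < α / c ^ 2 := by positivity
  have hsne : Real.sqrt (α / c ^ 2) ≠ 0 := (Real.sqrt_pos.mpr hαc).ne'
  have hlim2 : Tendsto (fun t => (Real.sqrt (φ t))⁻¹) atTop
      (nhds ((Real.sqrt (α / c ^ 2))⁻¹)) :=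
    (Real.continuous_sqrt.continuousAt.tendsto.comp hφlim).inv₀ hsne
  have hEq : ∀ᶠ t in atTop, (Real.sqrt (φ t))⁻¹ = k t := by
    filter_upwards [eventually_ge_atTop (0:ℝ)] with t ht
    have hkt := hkpos t ht
    have h5 : φ t = ((k t)⁻¹) ^ 2 := by rw [← hkform t ht, inv_pow]
    rw [h5, Real.sqrt_sq (by positivity), inv_inv]
  have hfinal : Tendsto k atTop (nhds ((Real.sqrt (α / c ^ 2))⁻¹)) := hlim2.congr' hEq
  have heq2 : (Real.sqrt (α / c ^ 2))⁻¹ = c / Real.sqrt α := by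
    rw [Real.sqrt_div hα.le, Real.sqrt_sq hc.le, inv_div]
  rw [← heq2]
  exact hfinal

theorem stmt_5 (c α τ : ℝ) (hc : 0 < c) (hα : 0 < α) (hτ : 0 < τ)
    (k k' : ℝ → ℝ)
    (hderiv : ∀ t : ℝ, 0 ≤ t → HasDerivAt k (k' t) t)
    (hode : ∀ t : ℝ, 0 ≤ t → τ * k' t = k t * c ^ 2 - α * k t ^ 3) :
    (0 < k 0 → Filter.Tendsto k Filter.atTop (nhds (c / Real.sqrt α))) ∧
      (k 0 < 0 → Filter.Tendsto k Filter.atTop (nhds (-(c / Real.sqrt α)))) := by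
  constructor
  · intro h0
    exact aux_pos c α τ hc hα hτ k k' hderiv hode h0
  · intro h0
    have h := aux_pos c α τ hc hα hτ (fun t => -k t) (fun t => -k' t)
      (fun t ht => (hderiv t ht).neg)
      (by intro t ht; have := hode t ht; ring_nf; ring_nf at this; linarith)
      (by simpa using h0)
    have := h.neg
    simpa using this
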